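/- The 1/3-approximate non-deterministic degree of the n-bit NOR function is at least √(n/8). More generally, N(NOR_n) = Θ(√n). -/

import Mathlib

open MvPolynomial

noncomputable section

/-- Real value of a Boolean. -/
def bval (b : Bool) : ℝ := if b then 1 else 0

/-- Evaluate a real multivariate polynomial at a Boolean point. -/
def evalB {ι : Type*} (p : MvPolynomial ι ℝ) (x : ι → Bool) : ℝ :=
  MvPolynomial.eval (fun i => bval (x i)) p

/-- `p` is an `ε`-approximate non-deterministic polynomial for `f`. -/
def IsApproxNdet {ι : Type*} (ε : ℝ) (f : (ι → Bool) → Bool)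
    (p : MvPolynomial ι ℝ) : Prop :=
  ∀ x, (f x = false → |evalB p x| ≤ ε) ∧ (f x = true → 1 ≤ |evalB p x|)

/-- The `ε`-approximate non-deterministic degree `N_ε(f)`. -/
def approxNdeg {ι : Type*} (ε : ℝ) (f : (ι → Bool) → Bool) : ℕ :=
  sInf {d | ∃ p : MvPolynomial ι ℝ, IsApproxNdet ε f p ∧ p.totalDegree ≤ d}

/-- `N(f) = N_{1/3}(f)`. -/
def N13 {ι : Type*} (f : (ι → Bool) → Bool) : ℕ := approxNdeg (1/3) f

/-- `M(f) = max{N(f), N(¬f)}`. -/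
def M13 {ι : Type*} (f : (ι → Bool) → Bool) : ℕ :=
  max (N13 f) (N13 fun x => !(f x))

/-- `p` sign-represents `f`. -/
def SignRep {ι : Type*} (p : MvPolynomial ι ℝ) (f : (ι → Bool) → Bool) : Prop :=
  ∀ x, evalB p x < 0 ↔ f x = true

/-- Sign degree (threshold degree). -/
def signDeg {ι : Type*} (f : (ι → Bool) → Bool) : ℕ :=
  sInf {d | ∃ p : MvPolynomial ι ℝ, SignRep p f ∧ p.totalDegree ≤ d}

/-- `1/3`-approximate degree. -/
def approxDeg {ι : Type*} (f : (ι → Bool) → Bool) : ℕ :=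
  sInf {d | ∃ p : MvPolynomial ι ℝ,
    (∀ x, |evalB p x - bval (f x)| ≤ 1/3) ∧ p.totalDegree ≤ d}

/-- Exact degree of a Boolean function. -/
def degB {ι : Type*} (f : (ι → Bool) → Bool) : ℕ :=
  sInf {d | ∃ p : MvPolynomial ι ℝ,
    (∀ x, evalB p x = bval (f x)) ∧ p.totalDegree ≤ d}

/-- Hamming weight. -/
def wt {ι : Type*} [Fintype ι] (x : ι → Bool) : ℕ :=
  (Finset.univ.filter fun i => x i = true).card

/-- Flip the bits of `x` inside the block `B`. -/
def flipB {ι : Type*} [DecidableEq ι] (x : ι → Bool) (B : Finset ι) : ι → Bool :=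
  fun i => if i ∈ B then !(x i) else x i

/-- Sensitivity of `f` at `x`. -/
def sensAt {ι : Type*} [Fintype ι] [DecidableEq ι]
    (f : (ι → Bool) → Bool) (x : ι → Bool) : ℕ :=
  (Finset.univ.filter fun i : ι => f (flipB x {i}) ≠ f x).card

/-- Sensitivity of `f`. -/
def sens {ι : Type*} [Fintype ι] [DecidableEq ι] (f : (ι → Bool) → Bool) : ℕ :=
  sSup {s | ∃ x, sensAt f x = s}

/-- 0-sensitivity. -/
def sens₀ {ι : Type*} [Fintype ι] [DecidableEq ι] (f : (ι → Bool) → Bool) : ℕ :=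
  sSup {s | ∃ x, f x = false ∧ sensAt f x = s}

/-- 1-sensitivity. -/
def sens₁ {ι : Type*} [Fintype ι] [DecidableEq ι] (f : (ι → Bool) → Bool) : ℕ :=
  sSup {s | ∃ x, f x = true ∧ sensAt f x = s}

/-- Block sensitivity of `f`. -/
def blockSens {ι : Type*} [Fintype ι] [DecidableEq ι] (f : (ι → Bool) → Bool) : ℕ :=
  sSup {k | ∃ x, ∃ B : Fin k → Finset ι,
    (∀ i j, i ≠ j → Disjoint (B i) (B j)) ∧ ∀ i, f (flipB x (B i)) ≠ f x}

/-- `S` is a certificate for `f` at `x`. -/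
def IsCert {ι : Type*} (f : (ι → Bool) → Bool) (x : ι → Bool) (S : Finset ι) : Prop :=
  ∀ y, (∀ i ∈ S, y i = x i) → f y = f x

/-- Certificate complexity at `x`. -/
def certAt {ι : Type*} (f : (ι → Bool) → Bool) (x : ι → Bool) : ℕ :=
  sInf {c | ∃ S : Finset ι, IsCert f x S ∧ S.card ≤ c}

/-- Certificate complexity of `f`. -/
def cert {ι : Type*} (f : (ι → Bool) → Bool) : ℕ :=
  sSup {c | ∃ x, certAt f x = c}

/-- Deterministic decision trees querying variables indexed by `ι`. -/
inductive DTree (ι : Type*) where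
  | leaf : Bool → DTree ι
  | node : ι → DTree ι → DTree ι → DTree ι

def DTree.evalT {ι : Type*} : DTree ι → (ι → Bool) → Bool
  | .leaf b, _ => b
  | .node i t0 t1, x => if x i then t1.evalT x else t0.evalT x

def DTree.depth {ι : Type*} : DTree ι → ℕ
  | .leaf _ => 0
  | .node _ t0 t1 => 1 + max t0.depth t1.depth

/-- Deterministic query complexity `D(f)`. -/
def Dquery {ι : Type*} (f : (ι → Bool) → Bool) : ℕ :=
  sInf {d | ∃ t : DTree ι, (∀ x, t.evalT x = f x) ∧ t.depth ≤ d}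

/-- `P` is a monotone path from `0^n` to `1^n`. -/
def IsMonoPath {ι : Type*} [Fintype ι] [DecidableEq ι] (P : ℕ → ι → Bool) : Prop :=
  P 0 = (fun _ => false) ∧ P (Fintype.card ι) = (fun _ => true) ∧
  ∀ t < Fintype.card ι, ∃ j, P t j = false ∧ P (t + 1) = Function.update (P t) j true

/-- Alternation number of `f` along the path `P`. -/
def pathAlt {ι : Type*} [Fintype ι] (f : (ι → Bool) → Bool) (P : ℕ → ι → Bool) : ℕ :=
  ((Finset.range (Fintype.card ι)).filter fun t => f (P t) ≠ f (P (t + 1))).card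

/-- Alternation number of `f`. -/
def altNum {ι : Type*} [Fintype ι] [DecidableEq ι] (f : (ι → Bool) → Bool) : ℕ :=
  sSup {a | ∃ P, IsMonoPath P ∧ pathAlt f P = a}

/-- Zebra function: all monotone paths have the same alternation number. -/
def IsZebra {ι : Type*} [Fintype ι] [DecidableEq ι] (f : (ι → Bool) → Bool) : Prop :=
  ∀ P Q, IsMonoPath P → IsMonoPath Q → pathAlt f P = pathAlt f Q

/-- Symmetric Boolean function. -/
def IsSymmF {ι : Type*} [Fintype ι] (f : (ι → Bool) → Bool) : Prop :=
  ∀ x y, wt x = wt y → f x = f y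

/-- Monotonically increasing. -/
def MonoIncr {ι : Type*} (f : (ι → Bool) → Bool) : Prop :=
  ∀ x y : ι → Bool, (∀ i, x i = true → y i = true) → f x = true → f y = true

/-- Monotonically decreasing. -/
def MonoDecr {ι : Type*} (f : (ι → Bool) → Bool) : Prop :=
  ∀ x y : ι → Bool, (∀ i, x i = true → y i = true) → f y = true → f x = true

/-- Monotone (increasing or decreasing). -/
def Monot {ι : Type*} (f : (ι → Bool) → Bool) : Prop := MonoIncr f ∨ MonoDecr f

/-- Non-constant. -/
def NonConst {ι : Type*} (f : (ι → Bool) → Bool) : Prop := ∃ x y, f x ≠ f y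

end

/-- The `n`-bit NOR function. -/
def NOR (n : ℕ) : (Fin n → Bool) → Bool := fun x => decide (∀ i, x i = false)

namespace Stmt4Aux

open Finset
open scoped Polynomial



lemma chebT_natDegree_le (d : ℕ) : (Polynomial.Chebyshev.T ℝ (d : ℤ)).natDegree ≤ d := by
  induction d using Nat.strong_induction_on with
  | _ d ih =>
    match d with
    | 0 => simp [Polynomial.Chebyshev.T_zero]
    | 1 => simp [Polynomial.Chebyshev.T_one]
    | (d + 2) =>
      have h := Polynomial.Chebyshev.T_add_two ℝ (d : ℤ)
      push_cast at h ⊢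
      rw [show ((d : ℤ) + 2) = ((d : ℤ) + 2) from rfl] at h
      rw [h]
      refine le_trans (Polynomial.natDegree_sub_le _ _) ?_
      have h1 : (2 * Polynomial.X * Polynomial.Chebyshev.T ℝ ((d : ℤ) + 1)).natDegree ≤ d + 2 := by
        refine le_trans (Polynomial.natDegree_mul_le) ?_
        have : (2 * Polynomial.X : ℝ[X]).natDegree ≤ 1 := by
          refine le_trans (Polynomial.natDegree_mul_le) ?_
          simp
        have h2 : (Polynomial.Chebyshev.T ℝ ((d : ℤ) + 1)).natDegree ≤ d + 1 := by
          have := ih (d + 1) (by omega)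
          push_cast at this; exact this
        omega
      have h2 : (Polynomial.Chebyshev.T ℝ (d : ℤ)).natDegree ≤ d := ih d (by omega)
      simp only [Nat.max_le]
      exact ⟨h1, by omega⟩

lemma chebT_abs_le (d : ℤ) {y : ℝ} (h1 : -1 ≤ y) (h2 : y ≤ 1) :
    |(Polynomial.Chebyshev.T ℝ d).eval y| ≤ 1 := by
  have : y = Real.cos (Real.arccos y) := (Real.cos_arccos h1 h2).symm
  rw [this, Polynomial.Chebyshev.T_real_cos]
  exact Real.abs_cos_le_one _

lemma chebT_growth {x : ℝ} (hx : 1 ≤ x) (d : ℕ) :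
    1 + (d : ℝ) ^ 2 * (x - 1) ≤ (Polynomial.Chebyshev.T ℝ (d : ℤ)).eval x := by
  have key : ∀ d : ℕ, (1 + (d : ℝ) ^ 2 * (x - 1) ≤ (Polynomial.Chebyshev.T ℝ (d : ℤ)).eval x)
      ∧ ((2 * d + 1 : ℝ) * (x - 1) ≤ (Polynomial.Chebyshev.T ℝ ((d : ℤ) + 1)).eval x - (Polynomial.Chebyshev.T ℝ (d : ℤ)).eval x)
      ∧ (1 ≤ (Polynomial.Chebyshev.T ℝ (d : ℤ)).eval x)
      ∧ (1 ≤ (Polynomial.Chebyshev.T ℝ ((d : ℤ) + 1)).eval x) := by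
    intro d
    induction d with
    | zero => refine ⟨?_, ?_, ?_, ?_⟩ <;> simp [Polynomial.Chebyshev.T_zero, Polynomial.Chebyshev.T_one] <;> nlinarith
    | succ d ih =>
      obtain ⟨h1, h2, h3, h4⟩ := ih
      have hrec := Polynomial.Chebyshev.T_add_two ℝ (d : ℤ)
      have hre : (Polynomial.Chebyshev.T ℝ ((d : ℤ) + 2)).eval x
          = 2 * x * (Polynomial.Chebyshev.T ℝ ((d : ℤ) + 1)).eval x - (Polynomial.Chebyshev.T ℝ (d : ℤ)).eval x := by
        rw [hrec]; simp
      have hd2 : ((d : ℤ) + 1 + 1) = ((d : ℤ) + 2) := by ring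
      push_cast
      rw [hd2]
      refine ⟨?_, ?_, ?_, ?_⟩
      · nlinarith
      · nlinarith
      · exact h4
      · nlinarith
  exact (key d).1

lemma chebU_eval_one (m : ℕ) : (Polynomial.Chebyshev.U ℝ (m : ℤ)).eval 1 = m + 1 := by
  induction m using Nat.strong_induction_on with
  | _ m ih =>
    match m with
    | 0 => simp [Polynomial.Chebyshev.U_zero]
    | 1 => norm_num [Polynomial.Chebyshev.U_one]
    | (m + 2) =>
      have h := Polynomial.Chebyshev.U_add_two ℝ (m : ℤ)
      have hre : (Polynomial.Chebyshev.U ℝ ((m : ℤ) + 2)).eval 1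
          = 2 * 1 * (Polynomial.Chebyshev.U ℝ ((m : ℤ) + 1)).eval 1 - (Polynomial.Chebyshev.U ℝ (m : ℤ)).eval 1 := by
        rw [h]; simp
      push_cast
      rw [show ((m : ℤ) + 2) = ((m : ℤ) + 2) from rfl] at hre
      rw [hre]
      have h1 := ih (m + 1) (by omega)
      have h0 := ih m (by omega)
      push_cast at h1 h0
      rw [h1, h0]; ring

lemma chebT_deriv_one (d : ℕ) : (Polynomial.derivative (Polynomial.Chebyshev.T ℝ (d : ℤ))).eval 1 = (d : ℝ) ^ 2 := by
  rw [Polynomial.Chebyshev.T_derivative_eq_U]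
  match d with
  | 0 => simp
  | (d + 1) =>
    have : ((d : ℤ) + 1 - 1) = (d : ℤ) := by ring
    push_cast
    rw [this]
    simp only [Polynomial.eval_mul, Polynomial.eval_intCast]
    rw [chebU_eval_one d]
    simp only [Polynomial.eval_add, Polynomial.eval_one, Polynomial.eval_natCast]
    push_cast; ring


/-- eval at 1 of ∏ (Polynomial.X - c k) and its Polynomial.derivative are nonneg when all c k ≤ 1. -/
lemma prod_deriv_nonneg (s : Finset ℕ) (c : ℕ → ℝ) (hc : ∀ k ∈ s, c k ≤ 1) :
    0 ≤ (∏ k ∈ s, (Polynomial.X - Polynomial.C (c k))).eval 1 ∧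
      0 ≤ (Polynomial.derivative (∏ k ∈ s, (Polynomial.X - Polynomial.C (c k)))).eval 1 := by
  classical
  induction s using Finset.induction_on with
  | empty => simp
  | @insert a s ha ih =>
    have hc' : ∀ k ∈ s, c k ≤ 1 := fun k hk => hc k (mem_insert_of_mem hk)
    obtain ⟨h1, h2⟩ := ih hc'
    have ha1 : 0 ≤ 1 - c a := by
      have := hc a (mem_insert_self a s); linarith
    rw [Finset.prod_insert ha]
    constructor
    · rw [Polynomial.eval_mul]; simp only [Polynomial.eval_sub, Polynomial.eval_X, Polynomial.eval_C]
      exact mul_nonneg ha1 h1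
    · rw [Polynomial.derivative_mul, Polynomial.eval_add, Polynomial.eval_mul, Polynomial.eval_mul]
      simp only [Polynomial.derivative_sub, Polynomial.derivative_X, Polynomial.derivative_C, sub_zero, Polynomial.eval_one, Polynomial.eval_sub,
        Polynomial.eval_X, Polynomial.eval_C]
      have : (0:ℝ) ≤ 1 * (∏ k ∈ s, (Polynomial.X - Polynomial.C (c k))).eval 1 := by simpa using h1
      nlinarith

lemma cos_nat_pi (j : ℕ) : Real.cos (j * Real.pi) = (-1 : ℝ) ^ j := by
  induction j with
  | zero => simp
  | succ j ih =>
    push_cast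
    rw [add_mul, one_mul, Real.cos_add_pi, ih]
    ring

/-- Markov endpoint inequality on [-1,1]: |f'(1)| ≤ d² M. -/
lemma markov_core {f : ℝ[X]} {d : ℕ} {M : ℝ} (hd : 1 ≤ d) (hdeg : f.natDegree ≤ d)
    (hb : ∀ y ∈ Set.Icc (-1:ℝ) 1, |f.eval y| ≤ M) :
    |(Polynomial.derivative f).eval 1| ≤ (d : ℝ) ^ 2 * M := by
  classical
  have hdR : (0:ℝ) < d := by exact_mod_cast hd
  set s : Finset ℕ := Finset.range (d + 1) with hs
  set v : ℕ → ℝ := fun j => Real.cos (j * Real.pi / d) with hv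
  -- angles in [0, π], strictly increasing
  have hangle : ∀ j ∈ s, (j : ℝ) * Real.pi / d ∈ Set.Icc 0 Real.pi := by
    intro j hj
    rw [hs, Finset.mem_range] at hj
    have hjd : (j : ℝ) ≤ d := by exact_mod_cast Nat.lt_succ_iff.mp hj
    constructor
    · positivity
    · rw [div_le_iff₀ hdR]
      nlinarith [Real.pi_pos, hjd]
  have hvlt : ∀ j ∈ s, ∀ k ∈ s, j < k → v k < v j := by
    intro j hj k hk hjk
    refine Real.strictAntiOn_cos (hangle j hj) (hangle k hk) ?_
    have : (j:ℝ) < k := by exact_mod_cast hjk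
    have := Real.pi_pos
    exact div_lt_div_of_pos_right (by nlinarith) hdR
  have hinj : Set.InjOn v s := by
    intro a ha b hb hab
    by_contra hne
    rcases lt_or_gt_of_ne hne with h | h
    · exact absurd hab (ne_of_gt (hvlt a ha b hb h))
    · exact absurd hab.symm (ne_of_gt (hvlt b hb a ha h))
  have h0s : 0 ∈ s := by simp [hs]
  have hv0 : v 0 = 1 := by simp [hv]
  have hvle1 : ∀ k ∈ s, v k ≤ 1 := by
    intro k hk
    rcases Nat.eq_zero_or_pos k with rfl | hkpos
    · rw [hv0]
    · exact le_of_lt (hv0 ▸ hvlt 0 h0s k hk hkpos)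
  -- weights
  set w : ℕ → ℝ := fun j => ∏ k ∈ s.erase j, (v j - v k) with hw
  have hwne : ∀ j ∈ s, w j ≠ 0 := by
    intro j hj
    rw [hw]
    apply Finset.prod_ne_zero_iff.mpr
    intro k hk
    have hkj : k ≠ j := Finset.ne_of_mem_erase hk
    have hks : k ∈ s := Finset.mem_of_mem_erase hk
    exact sub_ne_zero.mpr fun h => hkj (hinj hks hj h.symm)
  -- Lagrange basis numerator polynomials
  set P : ℕ → ℝ[X] := fun j => ∏ k ∈ s.erase j, (Polynomial.X - Polynomial.C (v k)) with hP
  have hPeval : ∀ (j : ℕ) (t : ℝ), (P j).eval t = ∏ k ∈ s.erase j, (t - v k) := by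
    intro j t; rw [hP]; simp [Polynomial.eval_prod]
  have hPzero : ∀ j ∈ s, ∀ i ∈ s, i ≠ j → (P j).eval (v i) = 0 := by
    intro j hj i hi hij
    rw [hPeval]
    exact Finset.prod_eq_zero (Finset.mem_erase.mpr ⟨hij, hi⟩) (by ring)
  have hPw : ∀ (j : ℕ), (P j).eval (v j) = w j := by
    intro j; rw [hPeval, hw]
  have hPdeg : ∀ j ∈ s, (P j).natDegree ≤ d := by
    intro j hj
    rw [hP]
    refine le_trans (Polynomial.natDegree_prod_le _ _) ?_
    have : ∀ k ∈ s.erase j, (Polynomial.X - Polynomial.C (v k)).natDegree ≤ 1 := by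
      intro k _; exact le_of_eq (Polynomial.natDegree_X_sub_C _)
    refine le_trans (Finset.sum_le_sum this) ?_
    rw [Finset.sum_const, smul_eq_mul, mul_one]
    have : (s.erase j).card = d := by
      rw [Finset.card_erase_of_mem hj, hs, Finset.card_range]
      omega
    omega
  have hcard : (#s : WithBot ℕ) = ((d + 1 : ℕ) : WithBot ℕ) := by
    rw [hs, Finset.card_range]
  -- interpolation identity
  have interp : ∀ g : ℝ[X], g.natDegree ≤ d →
      g = ∑ j ∈ s, Polynomial.C (g.eval (v j) / w j) * P j := by
    intro g hg
    have hsumdeg : (∑ j ∈ s, Polynomial.C (g.eval (v j) / w j) * P j).natDegree ≤ d := by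
      refine Polynomial.natDegree_sum_le_of_forall_le _ _ ?_
      intro j hj
      refine le_trans (Polynomial.natDegree_mul_le) ?_
      simpa using hPdeg j hj
    have hdiffdeg : (g - ∑ j ∈ s, Polynomial.C (g.eval (v j) / w j) * P j).degree < (#s : ℕ) := by
      refine lt_of_le_of_lt (Polynomial.degree_le_natDegree) ?_
      have h1 : (g - ∑ j ∈ s, Polynomial.C (g.eval (v j) / w j) * P j).natDegree ≤ d :=
        le_trans (Polynomial.natDegree_sub_le _ _) (by omega)
      rw [hcard]
      exact_mod_cast Nat.lt_succ_of_le h1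
    have heval : ∀ i ∈ s, (g - ∑ j ∈ s, Polynomial.C (g.eval (v j) / w j) * P j).eval (v i) = 0 := by
      intro i hi
      rw [Polynomial.eval_sub, Polynomial.eval_finset_sum]
      have hsum : ∑ j ∈ s, (Polynomial.C (g.eval (v j) / w j) * P j).eval (v i) = g.eval (v i) := by
        rw [Finset.sum_eq_single_of_mem i hi]
        · rw [Polynomial.eval_mul, Polynomial.eval_C, hPw, div_mul_cancel₀ _ (hwne i hi)]
        · intro j hj hji
          rw [Polynomial.eval_mul, hPzero j hj i hi (fun h => hji h.symm), mul_zero]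
      rw [hsum, sub_self]
    have := Polynomial.eq_zero_of_degree_lt_of_eval_index_eq_zero (v := v) s hinj hdiffdeg heval
    exact sub_eq_zero.mp this
  -- values of T at the nodes
  have hTeval : ∀ j ∈ s, (Polynomial.Chebyshev.T ℝ (d : ℤ)).eval (v j) = (-1 : ℝ) ^ j := by
    intro j hj
    have harg : v j = Real.cos ((j : ℝ) * Real.pi / d) := rfl
    rw [harg, Polynomial.Chebyshev.T_real_cos]
    rw [show ((d : ℤ) : ℝ) * ((j : ℝ) * Real.pi / d) = (j : ℝ) * Real.pi by
      push_cast; field_simp]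
    exact cos_nat_pi j
  -- sign decomposition of the weights
  have hwsign : ∀ j ∈ s, ∃ e : ℝ, 0 < e ∧ w j = (-1 : ℝ) ^ j * e := by
    intro j hj
    have hjd : j < d + 1 := by rwa [hs, Finset.mem_range] at hj
    have hsplit := Finset.prod_filter_mul_prod_filter_not (s.erase j) (· < j)
      (fun k => v j - v k)
    have hA : (s.erase j).filter (· < j) = Finset.range j := by
      ext k
      simp only [Finset.mem_filter, Finset.mem_erase, hs, Finset.mem_range]
      omega
    have hAval : ∏ k ∈ (s.erase j).filter (· < j), (v j - v k)
        = (-1 : ℝ) ^ j * ∏ k ∈ Finset.range j, (v k - v j) := by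
      rw [hA]
      have h1 : ∏ k ∈ Finset.range j, (v j - v k)
          = ∏ k ∈ Finset.range j, (-1 : ℝ) * (v k - v j) :=
        Finset.prod_congr rfl (fun k _ => by ring)
      rw [h1, Finset.prod_mul_distrib, Finset.prod_const, Finset.card_range]
    have hApos : 0 < ∏ k ∈ Finset.range j, (v k - v j) := by
      refine Finset.prod_pos ?_
      intro k hk
      rw [Finset.mem_range] at hk
      have hks : k ∈ s := by rw [hs, Finset.mem_range]; omega
      exact sub_pos.mpr (hvlt k hks j hj hk)
    have hBpos : 0 < ∏ k ∈ (s.erase j).filter (fun k => ¬ k < j), (v j - v k) := by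
      refine Finset.prod_pos ?_
      intro k hk
      simp only [Finset.mem_filter, Finset.mem_erase] at hk
      have hjk : j < k := by omega
      exact sub_pos.mpr (hvlt j hj k hk.1.2 hjk)
    refine ⟨(∏ k ∈ Finset.range j, (v k - v j)) *
      (∏ k ∈ (s.erase j).filter (fun k => ¬ k < j), (v j - v k)), mul_pos hApos hBpos, ?_⟩
    rw [hw]
    simp only
    rw [← hsplit, hAval]
    ring
  -- nonnegativity of Polynomial.derivative values
  set Dv : ℕ → ℝ := fun j => (Polynomial.derivative (P j)).eval 1 with hDv
  have hDnonneg : ∀ j ∈ s, 0 ≤ Dv j := by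
    intro j hj
    exact (prod_deriv_nonneg (s.erase j) v
      (fun k hk => hvle1 k (Finset.mem_of_mem_erase hk))).2
  -- Polynomial.derivative-at-1 of interpolation formula
  have hderiv : ∀ g : ℝ[X], g.natDegree ≤ d →
      (Polynomial.derivative g).eval 1 = ∑ j ∈ s, (g.eval (v j) / w j) * Dv j := by
    intro g hg
    conv_lhs => rw [interp g hg]
    rw [Polynomial.derivative_sum, Polynomial.eval_finset_sum]
    refine Finset.sum_congr rfl ?_
    intro j hj
    rw [Polynomial.derivative_C_mul, Polynomial.eval_mul, Polynomial.eval_C]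
  -- apply to T to compute the sum of |coefficients|
  have hTdeg : (Polynomial.Chebyshev.T ℝ (d : ℤ)).natDegree ≤ d := chebT_natDegree_le d
  have hTsum : ∑ j ∈ s, ((-1 : ℝ) ^ j / w j) * Dv j = (d : ℝ) ^ 2 := by
    have h1 := hderiv _ hTdeg
    have h2 : ∑ j ∈ s, ((-1 : ℝ) ^ j / w j) * Dv j
        = ∑ j ∈ s, ((Polynomial.Chebyshev.T ℝ (d : ℤ)).eval (v j) / w j) * Dv j :=
      Finset.sum_congr rfl (fun j hj => by rw [hTeval j hj])
    rw [h2, ← h1, chebT_deriv_one]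
  have hterm : ∀ j ∈ s, ((-1 : ℝ) ^ j / w j) * Dv j = 1 / |w j| * Dv j := by
    intro j hj
    obtain ⟨e, he, hwe⟩ := hwsign j hj
    have hne : ((-1 : ℝ) ^ j) ≠ 0 := pow_ne_zero _ (by norm_num)
    rw [hwe]
    congr 1
    rw [abs_mul, abs_pow, abs_neg, abs_one, one_pow, one_mul, abs_of_pos he]
    have hepos : e ≠ 0 := ne_of_gt he
    field_simp
  -- final bound
  have hM : 0 ≤ M := le_trans (abs_nonneg _) (hb 1 (by norm_num))
  have hfd := hderiv f hdeg
  rw [hfd]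
  refine le_trans (Finset.abs_sum_le_sum_abs _ _) ?_
  have hbd : ∀ j ∈ s, |(f.eval (v j) / w j) * Dv j| ≤ M * (((-1 : ℝ) ^ j / w j) * Dv j) := by
    intro j hj
    rw [hterm j hj]
    have hfv : |f.eval (v j)| ≤ M := hb (v j) ⟨Real.neg_one_le_cos _, Real.cos_le_one _⟩
    have hwpos : 0 < |w j| := abs_pos.mpr (hwne j hj)
    rw [abs_mul, abs_div, abs_of_nonneg (hDnonneg j hj)]
    have hR : M * (1 / |w j| * Dv j) = M / |w j| * Dv j := by ring
    rw [hR]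
    gcongr
    exact hDnonneg j hj
  refine le_trans (Finset.sum_le_sum hbd) ?_
  rw [← Finset.mul_sum, hTsum, mul_comm]

/-- Markov bound at the point c₁ + c₂ for a polynomial bounded on [c₁-|c₂|, c₁+|c₂|]. -/
lemma markov_pt {f : ℝ[X]} {d : ℕ} {M c₁ c₂ : ℝ} (hd : 1 ≤ d) (hdeg : f.natDegree ≤ d)
    (hc : c₂ ≠ 0)
    (hb : ∀ y ∈ Set.Icc (c₁ - |c₂|) (c₁ + |c₂|), |f.eval y| ≤ M) :
    |(Polynomial.derivative f).eval (c₁ + c₂)| ≤ (d : ℝ) ^ 2 * M / |c₂| := by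
  set g : ℝ[X] := f.comp (Polynomial.C c₁ + Polynomial.C c₂ * Polynomial.X) with hg
  have hlin : (Polynomial.C c₁ + Polynomial.C c₂ * Polynomial.X : ℝ[X]).natDegree ≤ 1 := by
    refine le_trans (Polynomial.natDegree_add_le _ _) ?_
    simp only [Polynomial.natDegree_C, max_le_iff]
    exact ⟨by omega, le_trans (Polynomial.natDegree_mul_le) (by simp)⟩
  have hgdeg : g.natDegree ≤ d := by
    rw [hg]
    refine le_trans (Polynomial.natDegree_comp_le) ?_
    calc f.natDegree * (Polynomial.C c₁ + Polynomial.C c₂ * Polynomial.X : ℝ[X]).natDegree ≤ d * 1 :=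
          Nat.mul_le_mul hdeg hlin
      _ = d := mul_one d
  have hgeval : ∀ x : ℝ, g.eval x = f.eval (c₁ + c₂ * x) := by
    intro x; rw [hg, Polynomial.eval_comp]; simp
  have hgb : ∀ x ∈ Set.Icc (-1:ℝ) 1, |g.eval x| ≤ M := by
    intro x hx
    obtain ⟨h1, h2⟩ := hx
    rw [hgeval]
    have hx1 : |x| ≤ 1 := abs_le.mpr ⟨h1, h2⟩
    have hcx : |c₂ * x| ≤ |c₂| := by
      rw [abs_mul]
      nlinarith [abs_nonneg c₂, abs_nonneg x]
    obtain ⟨hl, hr⟩ := abs_le.mp hcx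
    exact hb _ ⟨by linarith, by linarith⟩
  have hcore := markov_core hd hgdeg hgb
  have hderiv : (Polynomial.derivative g).eval 1 = c₂ * (Polynomial.derivative f).eval (c₁ + c₂) := by
    rw [hg, Polynomial.derivative_comp, Polynomial.eval_mul, Polynomial.eval_comp]
    simp
  rw [hderiv, abs_mul] at hcore
  have habs : 0 < |c₂| := abs_pos.mpr hc
  rw [le_div_iff₀ habs]
  linarith [mul_comm |c₂| |(Polynomial.derivative f).eval (c₁ + c₂)|]

/-- Interior Markov bound on [0, n]. -/
lemma markov_interior {f : ℝ[X]} {d n : ℕ} {M : ℝ} (hd : 1 ≤ d) (hn : 1 ≤ n)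
    (hdeg : f.natDegree ≤ d) (hb : ∀ y ∈ Set.Icc (0:ℝ) (n:ℝ), |f.eval y| ≤ M)
    {x : ℝ} (hx0 : 0 ≤ x) (hxn : x ≤ (n:ℝ)) :
    |(Polynomial.derivative f).eval x| ≤ 4 * (d:ℝ)^2 * M / n := by
  have hnR : (0:ℝ) < n := by exact_mod_cast hn
  have hM : 0 ≤ M := le_trans (abs_nonneg _) (hb 0 ⟨le_refl _, by positivity⟩)
  have hd2 : (0:ℝ) ≤ (d:ℝ)^2 := by positivity
  rcases le_or_gt x ((n:ℝ)/2) with h | h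
  · have hc2pos : 0 < ((n:ℝ) - x)/2 := by linarith
    have hc : -(((n:ℝ) - x)/2) ≠ 0 := by intro hh; nlinarith
    have habs : |(-(((n:ℝ) - x)/2))| = ((n:ℝ) - x)/2 := by
      rw [abs_neg, abs_of_pos hc2pos]
    have hb2 : ∀ y ∈ Set.Icc ((x + n)/2 - |(-(((n:ℝ) - x)/2))|)
        ((x + n)/2 + |(-(((n:ℝ) - x)/2))|), |f.eval y| ≤ M := by
      intro y hy
      rw [habs] at hy
      obtain ⟨hy1, hy2⟩ := hy
      exact hb y ⟨by linarith, by linarith⟩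
    have happ := markov_pt hd hdeg hc hb2
    rw [habs] at happ
    have hpt : (x + (n:ℝ))/2 + -(((n:ℝ) - x)/2) = x := by ring
    rw [hpt] at happ
    refine le_trans happ ?_
    rw [div_le_div_iff₀ hc2pos hnR]
    nlinarith [mul_le_mul_of_nonneg_left (show (n:ℝ) ≤ 2*(((n:ℝ) - x)) by linarith)
      (mul_nonneg hd2 hM)]
  · have hc2pos : 0 < x/2 := by linarith
    have hc : x/2 ≠ 0 := ne_of_gt hc2pos
    have habs : |x/2| = x/2 := abs_of_pos hc2pos
    have hb2 : ∀ y ∈ Set.Icc (x/2 - |x/2|) (x/2 + |x/2|), |f.eval y| ≤ M := by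
      intro y hy
      rw [habs] at hy
      obtain ⟨hy1, hy2⟩ := hy
      exact hb y ⟨by linarith, by linarith⟩
    have happ := markov_pt hd hdeg hc hb2
    rw [habs] at happ
    have hpt : x/2 + x/2 = x := by ring
    rw [hpt] at happ
    refine le_trans happ ?_
    rw [div_le_div_iff₀ hc2pos hnR]
    nlinarith [mul_le_mul_of_nonneg_left (show (n:ℝ) ≤ 2*x by linarith)
      (mul_nonneg hd2 hM)]

lemma poly_abs_max (f : ℝ[X]) (a b : ℝ) (hab : a ≤ b) :
    ∃ M, (∀ x ∈ Set.Icc a b, |f.eval x| ≤ M) ∧ ∃ ξ ∈ Set.Icc a b, |f.eval ξ| = M := by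
  have hc : ContinuousOn (fun x => |f.eval x|) (Set.Icc a b) :=
    (continuous_abs.comp f.continuous).continuousOn
  obtain ⟨ξ, hξ, hmax⟩ := (isCompact_Icc).exists_isMaxOn (Set.nonempty_Icc.mpr hab) hc
  exact ⟨|f.eval ξ|, fun x hx => hmax hx, ξ, hξ, rfl⟩

lemma poly_mvt (q : ℝ[X]) {a b : ℝ} (hab : a < b) :
    ∃ c ∈ Set.Ioo a b, (Polynomial.derivative q).eval c = (q.eval b - q.eval a) / (b - a) :=
  exists_hasDerivAt_eq_slope _ _ hab q.continuous.continuousOn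
    (fun x _ => q.hasDerivAt x)

lemma abs_eval_sub_le {q : ℝ[X]} {lo hi D : ℝ}
    (hD : ∀ c ∈ Set.Icc lo hi, |(Polynomial.derivative q).eval c| ≤ D)
    {u v : ℝ} (hu : u ∈ Set.Icc lo hi) (hv : v ∈ Set.Icc lo hi) :
    |q.eval u - q.eval v| ≤ D * |u - v| := by
  have main : ∀ u v : ℝ, u ∈ Set.Icc lo hi → v ∈ Set.Icc lo hi → u < v →
      |q.eval u - q.eval v| ≤ D * |u - v| := by
    intro u v hu hv huv
    obtain ⟨c, hc, hceq⟩ := poly_mvt q huv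
    have hsub : q.eval v - q.eval u = (Polynomial.derivative q).eval c * (v - u) := by
      rw [hceq, div_mul_cancel₀ _ (sub_ne_zero.mpr (ne_of_gt huv))]
    have hcin : c ∈ Set.Icc lo hi :=
      ⟨le_trans hu.1 (le_of_lt hc.1), le_trans (le_of_lt hc.2) hv.2⟩
    have hcb := hD c hcin
    have h1 : |q.eval u - q.eval v| = |(Polynomial.derivative q).eval c| * |v - u| := by
      rw [abs_sub_comm, hsub, abs_mul]
    rw [h1, abs_sub_comm u v]
    apply mul_le_mul_of_nonneg_right hcb (abs_nonneg _)
  rcases lt_trichotomy u v with h | h | h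
  · exact main u v hu hv h
  · subst h; simp
  · rw [abs_sub_comm, abs_sub_comm u v]; exact main v u hv hu h

lemma univar_lower {q : ℝ[X]} {n : ℕ} (hn : 1 ≤ n) (h0 : 1 ≤ q.eval 0)
    (hk : ∀ k : ℕ, 1 ≤ k → k ≤ n → |q.eval (k:ℝ)| ≤ 1/3) :
    Real.sqrt ((n:ℝ)/8) ≤ (q.natDegree : ℝ) := by
  set d := q.natDegree with hd
  set β := q.eval 0 with hβ
  have hnR : (0:ℝ) < n := by exact_mod_cast hn
  have hn1 : (1:ℝ) ≤ (n:ℝ) := by exact_mod_cast hn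
  have hd1 : 1 ≤ d := by
    by_contra hcon
    have hd0 : d = 0 := by omega
    have hqc : q = Polynomial.C (q.coeff 0) := Polynomial.eq_C_of_natDegree_eq_zero hd0
    have h1 := hk 1 le_rfl hn
    have h0' : 1 ≤ q.eval 0 := h0
    rw [hqc] at h0' h1
    simp only [Polynomial.eval_C] at h0' h1
    have h0 := h0'
    have := abs_le.mp h1
    linarith
  have key : (n:ℝ) ≤ 8 * (d:ℝ)^2 := by
    by_contra hcon
    push_neg at hcon
    obtain ⟨M, hM, ξ, hξ, hξM⟩ := poly_abs_max q 0 (n:ℝ) (by positivity)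
    obtain ⟨D, hD, ζ0, hζ0, hζ0D⟩ := poly_abs_max (Polynomial.derivative q) 0 (n:ℝ) (by positivity)
    have hβ1 : (1:ℝ) ≤ β := h0
    have hval : ∀ k : ℕ, k ≤ n → |q.eval (k:ℝ)| ≤ β := by
      intro k hkn
      rcases Nat.eq_zero_or_pos k with rfl | hpos
      · simp only [Nat.cast_zero]
        rw [abs_of_pos (by linarith)]
      · exact le_trans (hk k hpos hkn) (by linarith)
    have hDle : D ≤ 4*(d:ℝ)^2*M/n := by
      rw [← hζ0D]
      exact markov_interior hd1 hn le_rfl hM hζ0.1 hζ0.2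
    have hD0 : 0 ≤ D := le_trans (abs_nonneg _) (hD 0 ⟨le_rfl, by positivity⟩)
    have hMle : M ≤ β + D/2 := by
      set k : ℤ := round ξ with hkdef
      have hk1 : |ξ - (k:ℝ)| ≤ 1/2 := abs_sub_round ξ
      obtain ⟨hr1, hr2⟩ := abs_le.mp hk1
      have hk0 : 0 ≤ k := by
        by_contra hneg
        push_neg at hneg
        have hk1' : k ≤ -1 := by omega
        have : (k:ℝ) ≤ -1 := by exact_mod_cast hk1'
        linarith [hξ.1]
      have hkn2 : k ≤ (n:ℤ) := by
        by_contra hgt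
        push_neg at hgt
        have hgt' : (n:ℤ) + 1 ≤ k := by omega
        have : ((n:ℝ) + 1) ≤ (k:ℝ) := by exact_mod_cast hgt'
        linarith [hξ.2]
      have hkR0 : (0:ℝ) ≤ (k:ℝ) := by exact_mod_cast hk0
      have hkRn : (k:ℝ) ≤ (n:ℝ) := by exact_mod_cast hkn2
      have hqk : |q.eval (k:ℝ)| ≤ β := by
        have hcast : (k.toNat : ℝ) = (k:ℝ) := by exact_mod_cast Int.toNat_of_nonneg hk0
        rw [← hcast]
        refine hval k.toNat ?_
        omega
      have hdiff := abs_eval_sub_le (q := q) (lo := 0) (hi := (n:ℝ)) hD hξ ⟨hkR0, hkRn⟩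
      have : |q.eval ξ| ≤ |q.eval (k:ℝ)| + D * |ξ - (k:ℝ)| := by
        calc |q.eval ξ| = |q.eval (k:ℝ) + (q.eval ξ - q.eval (k:ℝ))| := by ring_nf
          _ ≤ |q.eval (k:ℝ)| + |q.eval ξ - q.eval (k:ℝ)| := abs_add_le _ _
          _ ≤ |q.eval (k:ℝ)| + D * |ξ - (k:ℝ)| := by linarith [hdiff]
      rw [hξM] at this
      have hDk : D * |ξ - (k:ℝ)| ≤ D * (1/2) := mul_le_mul_of_nonneg_left hk1 hD0
      linarith
    have hslope : β - 1/3 ≤ D := by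
      obtain ⟨c, hc, hceq⟩ := poly_mvt q (show (0:ℝ) < 1 by norm_num)
      have hcin : c ∈ Set.Icc (0:ℝ) (n:ℝ) :=
        ⟨le_of_lt hc.1, le_trans (le_of_lt hc.2) hn1⟩
      have hcb := hD c hcin
      have h1 : (Polynomial.derivative q).eval c = q.eval 1 - β := by
        rw [hceq]; simp [hβ]
      have hq1 : |q.eval 1| ≤ 1/3 := by
        have := hk 1 le_rfl hn
        simpa using this
      have : β - 1/3 ≤ |(Polynomial.derivative q).eval c| := by
        rw [h1]
        have := abs_le.mp hq1
        rcases abs_cases (q.eval 1 - β) with ⟨he, _⟩ | ⟨he, _⟩ <;> linarith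
      linarith
    have ht : 4*(d:ℝ)^2/n < 1/2 := by
      rw [div_lt_iff₀ hnR]
      nlinarith
    have hMD : D ≤ 4*(d:ℝ)^2/n * (β + D/2) := by
      have he : 4*(d:ℝ)^2*M/n = 4*(d:ℝ)^2/n * M := by ring
      rw [he] at hDle
      exact le_trans hDle (mul_le_mul_of_nonneg_left hMle (by positivity))
    have h1 : 4*(d:ℝ)^2/n * β < 1/2 * β :=
      mul_lt_mul_of_pos_right ht (by linarith)
    have h2 : 4*(d:ℝ)^2/n * (D/2) ≤ 1/2 * (D/2) :=
      mul_le_mul_of_nonneg_right (le_of_lt ht) (by linarith)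
    have hcontr : D < β/2 + D/4 := by nlinarith
    linarith
  have hfin : Real.sqrt ((n:ℝ)/8) ≤ Real.sqrt ((d:ℝ)^2) :=
    Real.sqrt_le_sqrt (by linarith)
  rwa [Real.sqrt_sq (by positivity)] at hfin


section Stage5
open MvPolynomial in
/-- Counting weight-`k` boolean vectors whose support contains `S`. -/
lemma count_weight_superset {n : ℕ} (S : Finset (Fin n)) {k : ℕ} (hsk : S.card ≤ k)
    (hkn : k ≤ n) :
    ((Finset.univ : Finset (Fin n → Bool)).filter
        (fun x => wt x = k ∧ S ⊆ Finset.univ.filter (fun i => x i = true))).card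
      = (n - S.card).choose (k - S.card) := by
  classical
  have hcard : (Finset.univ \ S : Finset (Fin n)).card = n - S.card := by
    rw [Finset.card_sdiff_of_subset (Finset.subset_univ S), Finset.card_univ, Fintype.card_fin]
  have hbij := Finset.card_nbij'
    (i := fun x : Fin n → Bool => Finset.univ.filter (fun i => x i = true) \ S)
    (j := fun T : Finset (Fin n) => fun i => decide (i ∈ T ∪ S))
    (s := (Finset.univ : Finset (Fin n → Bool)).filter
        (fun x => wt x = k ∧ S ⊆ Finset.univ.filter (fun i => x i = true)))
    (t := Finset.powersetCard (k - S.card) (Finset.univ \ S))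
    ?_ ?_ ?_ ?_
  · rw [hbij, Finset.card_powersetCard, hcard]
  · intro x hx
    rw [Finset.mem_coe, Finset.mem_filter] at hx
    obtain ⟨-, hwt, hS⟩ := hx
    rw [Finset.mem_coe, Finset.mem_powersetCard]
    constructor
    · exact Finset.sdiff_subset_sdiff (Finset.subset_univ _) (le_refl _)
    · rw [Finset.card_sdiff_of_subset hS]
      rw [wt] at hwt
      rw [hwt]
  · intro T hT
    rw [Finset.mem_coe, Finset.mem_powersetCard] at hT
    obtain ⟨hTsub, hTcard⟩ := hT
    have hdisj : Disjoint T S := by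
      refine Finset.disjoint_left.mpr ?_
      intro a haT haS
      have := hTsub haT
      rw [Finset.mem_sdiff] at this
      exact this.2 haS
    have hset : Finset.univ.filter (fun i => (decide (i ∈ T ∪ S)) = true) = T ∪ S := by
      ext i
      simp
    rw [Finset.mem_coe, Finset.mem_filter]
    refine ⟨Finset.mem_univ _, ?_, ?_⟩
    · rw [wt, hset, Finset.card_union_of_disjoint hdisj, hTcard]
      omega
    · rw [hset]
      exact Finset.subset_union_right
  · intro x hx
    rw [Finset.mem_coe, Finset.mem_filter] at hx
    obtain ⟨-, hwt, hS⟩ := hx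
    funext i
    dsimp only
    rw [Finset.sdiff_union_of_subset hS]
    by_cases h : x i = true
    · simp [h]
    · simp only [Bool.not_eq_true] at h
      simp [h]
  · intro T hT
    rw [Finset.mem_coe, Finset.mem_powersetCard] at hT
    obtain ⟨hTsub, -⟩ := hT
    have hdisj : Disjoint T S := by
      refine Finset.disjoint_left.mpr ?_
      intro a haT haS
      have := hTsub haT
      rw [Finset.mem_sdiff] at this
      exact this.2 haS
    have hset : Finset.univ.filter (fun i => (decide (i ∈ T ∪ S)) = true) = T ∪ S := by
      ext i
      simp
    dsimp only
    rw [hset, Finset.union_sdiff_cancel_right hdisj]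

open MvPolynomial in
lemma evalB_monomial {n : ℕ} (α : Fin n →₀ ℕ) (c : ℝ) (x : Fin n → Bool) :
    evalB (monomial α c) x
      = if α.support ⊆ Finset.univ.filter (fun i => x i = true) then c else 0 := by
  classical
  rw [evalB, MvPolynomial.eval_monomial, Finsupp.prod]
  by_cases h : α.support ⊆ Finset.univ.filter (fun i => x i = true)
  · rw [if_pos h]
    have hone : ∀ i ∈ α.support, bval (x i) ^ α i = 1 := by
      intro i hi
      have hxi : x i = true := by
        have := h hi
        rw [Finset.mem_filter] at this
        exact this.2
      rw [hxi]
      simp [bval]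
    rw [Finset.prod_congr rfl hone, Finset.prod_const_one, mul_one]
  · rw [if_neg h]
    obtain ⟨i, hi, hxi⟩ := Finset.not_subset.mp h
    have hxi' : x i = false := by
      by_contra hcon
      simp only [Bool.not_eq_false] at hcon
      exact hxi (Finset.mem_filter.mpr ⟨Finset.mem_univ _, hcon⟩)
    have hαi : α i ≠ 0 := Finsupp.mem_support_iff.mp hi
    rw [Finset.prod_eq_zero hi, mul_zero]
    rw [hxi']
    simp [bval, zero_pow hαi]

open MvPolynomial in
lemma sum_weight_monomial {n : ℕ} (α : Fin n →₀ ℕ) (c : ℝ) {k : ℕ} (hkn : k ≤ n) :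
    ∑ x ∈ Finset.univ.filter (fun x : Fin n → Bool => wt x = k), evalB (monomial α c) x
      = c * (if α.support.card ≤ k
          then ((n - α.support.card).choose (k - α.support.card) : ℝ) else 0) := by
  classical
  have h1 : ∀ x ∈ Finset.univ.filter (fun x : Fin n → Bool => wt x = k),
      evalB (monomial α c) x
        = if α.support ⊆ Finset.univ.filter (fun i => x i = true) then c else 0 :=
    fun x _ => evalB_monomial α c x
  rw [Finset.sum_congr rfl h1, Finset.sum_ite, Finset.sum_const_zero, add_zero,
    Finset.sum_const, Finset.filter_filter, nsmul_eq_mul]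
  by_cases hsk : α.support.card ≤ k
  · rw [if_pos hsk]
    have := count_weight_superset α.support hsk hkn
    rw [this]
    ring
  · rw [if_neg hsk, mul_zero]
    have hempty : (Finset.univ : Finset (Fin n → Bool)).filter
        (fun x => wt x = k ∧ α.support ⊆ Finset.univ.filter (fun i => x i = true)) = ∅ := by
      rw [Finset.filter_eq_empty_iff]
      intro x _
      rintro ⟨hwt, hsub⟩
      have := Finset.card_le_card hsub
      rw [wt] at hwt
      rw [hwt] at this
      omega
    rw [hempty]
    simp

lemma coeff_step {n k s : ℕ} (hs : s ≤ n) (hkn : k ≤ n) (c : ℝ) :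
    c / ((s.factorial : ℝ) * (n.choose s)) * ((k.descFactorial s : ℝ) * (n.choose k : ℝ))
      = c * (if s ≤ k then ((n - s).choose (k - s) : ℝ) else 0) := by
  have hfac : (s.factorial : ℝ) ≠ 0 := by exact_mod_cast s.factorial_ne_zero
  have hcns : (n.choose s : ℝ) ≠ 0 := Nat.cast_ne_zero.mpr (Nat.choose_pos hs).ne'
  by_cases hsk : s ≤ k
  · rw [if_pos hsk]
    have hid : n.choose k * k.choose s = n.choose s * (n - s).choose (k - s) :=
      Nat.choose_mul hsk
    have hidR : (n.choose k : ℝ) * (k.choose s : ℝ)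
        = (n.choose s : ℝ) * ((n - s).choose (k - s) : ℝ) := by exact_mod_cast hid
    have hdesc : (k.descFactorial s : ℝ) = (s.factorial : ℝ) * (k.choose s : ℝ) := by
      exact_mod_cast k.descFactorial_eq_factorial_mul_choose s
    rw [hdesc]
    field_simp
    linear_combination c * hidR
  · rw [if_neg hsk, mul_zero]
    have : k.descFactorial s = 0 := Nat.descFactorial_eq_zero_iff_lt.mpr (by omega)
    rw [this]
    simp

noncomputable def fallPoly (s : ℕ) : Polynomial ℝ :=
  ∏ i ∈ Finset.range s, (Polynomial.X - Polynomial.C (i : ℝ))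

lemma fallPoly_natDegree_le (s : ℕ) : (fallPoly s).natDegree ≤ s := by
  rw [fallPoly]
  refine le_trans (Polynomial.natDegree_prod_le _ _) ?_
  have : ∀ i ∈ Finset.range s, (Polynomial.X - Polynomial.C (i:ℝ)).natDegree ≤ 1 :=
    fun i _ => le_of_eq (Polynomial.natDegree_X_sub_C _)
  refine le_trans (Finset.sum_le_sum this) ?_
  simp

lemma fallPoly_eval (s k : ℕ) : (fallPoly s).eval (k : ℝ) = (k.descFactorial s : ℝ) := by
  induction s with
  | zero => simp [fallPoly]
  | succ s ih =>
    rw [fallPoly, Finset.prod_range_succ, Polynomial.eval_mul, ← fallPoly, ih]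
    simp only [Polynomial.eval_sub, Polynomial.eval_X, Polynomial.eval_C]
    rw [Nat.descFactorial_succ]
    rcases le_or_gt s k with h | h
    · push_cast [Nat.cast_sub h]
      ring
    · have h1 : k.descFactorial s = 0 := Nat.descFactorial_eq_zero_iff_lt.mpr h
      have h2 : k - s = 0 := by omega
      rw [h1, h2]
      simp

open MvPolynomial in
lemma symm_exists {n : ℕ} (p : MvPolynomial (Fin n) ℝ) :
    ∃ q : Polynomial ℝ, q.natDegree ≤ p.totalDegree ∧
      ∀ k : ℕ, k ≤ n →
        q.eval (k:ℝ) * (n.choose k : ℝ)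
          = ∑ x ∈ Finset.univ.filter (fun x : Fin n → Bool => wt x = k), evalB p x := by
  classical
  refine ⟨∑ α ∈ p.support,
    Polynomial.C (MvPolynomial.coeff α p /
      ((α.support.card.factorial : ℝ) * (n.choose α.support.card : ℝ)))
      * fallPoly α.support.card, ?_, ?_⟩
  · refine Polynomial.natDegree_sum_le_of_forall_le _ _ ?_
    intro α hα
    refine le_trans (Polynomial.natDegree_mul_le) ?_
    have h1 : α.support.card ≤ α.sum (fun _ e => e) := by
      rw [Finsupp.sum]
      refine le_trans ?_ (Finset.card_nsmul_le_sum α.support _ 1 (fun i hi => ?_))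
      · simp
      · exact Nat.one_le_iff_ne_zero.mpr (Finsupp.mem_support_iff.mp hi)
    have h2 : α.sum (fun _ e => e) ≤ p.totalDegree := MvPolynomial.le_totalDegree hα
    have h3 := fallPoly_natDegree_le α.support.card
    simp only [Polynomial.natDegree_C, zero_add]
    omega
  · intro k hkn
    rw [Polynomial.eval_finset_sum]
    have hps : ∀ x : Fin n → Bool, evalB p x
        = ∑ α ∈ p.support, evalB (monomial α (MvPolynomial.coeff α p)) x := by
      intro x
      conv_lhs => rw [show p = ∑ α ∈ p.support, monomial α (MvPolynomial.coeff α p) from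
        (MvPolynomial.support_sum_monomial_coeff p).symm]
      rw [evalB, map_sum]
      rfl
    rw [Finset.sum_congr rfl (fun x _ => hps x), Finset.sum_comm]
    rw [Finset.sum_mul]
    refine Finset.sum_congr rfl ?_
    intro α hα
    rw [Finset.sum_congr rfl (fun x _ => rfl), sum_weight_monomial α _ hkn]
    rw [Polynomial.eval_mul, Polynomial.eval_C, fallPoly_eval]
    have hs : α.support.card ≤ n := by
      have := Finset.card_le_card (Finset.subset_univ α.support)
      rwa [Finset.card_univ, Fintype.card_fin] at this
    have := coeff_step hs hkn (MvPolynomial.coeff α p)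
    rw [mul_assoc]
    exact this

end Stage5

section Stage6

lemma wt_zero_iff {n : ℕ} (x : Fin n → Bool) : wt x = 0 ↔ ∀ i, x i = false := by
  rw [wt, Finset.card_eq_zero, Finset.filter_eq_empty_iff]
  constructor
  · intro h i
    have := h (Finset.mem_univ i)
    simpa using this
  · intro h i _
    simp [h i]

lemma wt_le {n : ℕ} (x : Fin n → Bool) : wt x ≤ n := by
  rw [wt]
  have := Finset.card_le_card (Finset.filter_subset (fun i => x i = true) Finset.univ)
  rwa [Finset.card_univ, Fintype.card_fin] at this

lemma sum_bval {n : ℕ} (x : Fin n → Bool) : ∑ i, bval (x i) = (wt x : ℝ) := by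
  have h1 : ∀ i, bval (x i) = if x i = true then (1:ℝ) else 0 := fun i => rfl
  rw [Finset.sum_congr rfl (fun i _ => h1 i), Finset.sum_boole, wt]

lemma NOR_true_iff {n : ℕ} (x : Fin n → Bool) : NOR n x = true ↔ ∀ i, x i = false := by
  rw [NOR, decide_eq_true_eq]

lemma NOR_false_of_wt_pos {n : ℕ} {x : Fin n → Bool} (h : 1 ≤ wt x) : NOR n x = false := by
  rw [NOR, decide_eq_false_iff_not]
  intro hall
  rw [← wt_zero_iff] at hall
  omega

/-- From a good univariate polynomial we get a nondeterministic approximator for NOR. -/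
lemma nor_mem_of_univar {n : ℕ} {u : Polynomial ℝ} (h0 : 1 ≤ |u.eval 0|)
    (hk : ∀ k : ℕ, 1 ≤ k → k ≤ n → |u.eval (k:ℝ)| ≤ 1/3) :
    ∃ p : MvPolynomial (Fin n) ℝ, IsApproxNdet (1/3) (NOR n) p
      ∧ p.totalDegree ≤ u.natDegree := by
  classical
  set S : MvPolynomial (Fin n) ℝ := ∑ i, MvPolynomial.X i with hS
  refine ⟨Polynomial.aeval S u, ?_, ?_⟩
  · have heval : ∀ x : Fin n → Bool, evalB (Polynomial.aeval S u) x = u.eval ((wt x : ℝ)) := by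
      intro x
      rw [evalB]
      have h1 : MvPolynomial.eval (fun i => bval (x i)) (Polynomial.aeval S u)
          = Polynomial.aeval (MvPolynomial.eval (fun i => bval (x i)) S) u := by
        have halg := Polynomial.aeval_algHom_apply
          (MvPolynomial.aeval (R := ℝ) (fun i => bval (x i))) S u
        have hco : ∀ y : MvPolynomial (Fin n) ℝ,
            MvPolynomial.aeval (R := ℝ) (fun i => bval (x i)) y
              = MvPolynomial.eval (fun i => bval (x i)) y :=
          fun y => RingHom.congr_fun (MvPolynomial.coe_aeval_eq_eval _) y
        rw [← hco (Polynomial.aeval S u), ← hco S]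
        exact halg.symm
      rw [h1]
      have h2 : MvPolynomial.eval (fun i => bval (x i)) S = (wt x : ℝ) := by
        rw [hS, map_sum]
        simp only [MvPolynomial.eval_X]
        exact sum_bval x
      rw [h2]
      simp
    intro x
    constructor
    · intro hfalse
      rw [heval]
      have hwt1 : 1 ≤ wt x := by
        by_contra hcon
        have h0' : wt x = 0 := by omega
        rw [wt_zero_iff] at h0'
        rw [(NOR_true_iff x).mpr h0'] at hfalse
        simp at hfalse
      exact hk (wt x) hwt1 (wt_le x)
    · intro htrue
      rw [heval]
      have h0' : wt x = 0 := (wt_zero_iff x).mpr ((NOR_true_iff x).mp htrue)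
      rw [h0']
      simpa using h0
  · rw [Polynomial.aeval_eq_sum_range]
    refine le_trans (MvPolynomial.totalDegree_finset_sum _ _) ?_
    refine Finset.sup_le ?_
    intro i hi
    rw [Finset.mem_range] at hi
    refine le_trans (MvPolynomial.totalDegree_smul_le _ _) ?_
    refine le_trans (MvPolynomial.totalDegree_pow _ _) ?_
    have hS1 : S.totalDegree ≤ 1 := by
      rw [hS]
      refine le_trans (MvPolynomial.totalDegree_finset_sum _ _) ?_
      refine Finset.sup_le ?_
      intro j _
      exact le_of_eq (MvPolynomial.totalDegree_X j)
    calc i * S.totalDegree ≤ i * 1 := Nat.mul_le_mul_left i hS1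
      _ = i := Nat.mul_one i
      _ ≤ u.natDegree := by omega

lemma exists_univar (n : ℕ) (hn : 1 ≤ n) :
    ∃ u : Polynomial ℝ, 1 ≤ |u.eval 0|
      ∧ (∀ k : ℕ, 1 ≤ k → k ≤ n → |u.eval (k:ℝ)| ≤ 1/3)
      ∧ u.natDegree ≤ n.sqrt + 1 := by
  rcases eq_or_lt_of_le hn with h1 | h2
  · -- n = 1
    subst h1
    refine ⟨Polynomial.C 1 - Polynomial.C (2/3) * Polynomial.X, ?_, ?_, ?_⟩
    · simp
    · intro k hk1 hkn
      have hk : k = 1 := by omega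
      subst hk
      simp only [Nat.cast_one, Polynomial.eval_sub, Polynomial.eval_mul, Polynomial.eval_C,
        Polynomial.eval_X, Polynomial.eval_one]
      norm_num [abs_le]
    · refine le_trans (Polynomial.natDegree_sub_le _ _) ?_
      simp only [Polynomial.natDegree_C, max_le_iff]
      refine ⟨by omega, ?_⟩
      refine le_trans (Polynomial.natDegree_mul_le) ?_
      simp
  · -- n ≥ 2
    have hn2 : 2 ≤ n := h2
    have hnR : (2:ℝ) ≤ (n:ℝ) := by exact_mod_cast hn2
    have hden : (0:ℝ) < (n:ℝ) - 1 := by linarith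
    set d : ℕ := n.sqrt + 1 with hd
    set u : Polynomial ℝ := Polynomial.C (1/3 : ℝ) *
      (Polynomial.Chebyshev.T ℝ (d : ℤ)).comp
        (Polynomial.C (((n:ℝ)+1)/((n:ℝ)-1)) - Polynomial.C (2/((n:ℝ)-1)) * Polynomial.X)
      with hu
    have hueval : ∀ t : ℝ, u.eval t
        = 1/3 * (Polynomial.Chebyshev.T ℝ (d : ℤ)).eval
            (((n:ℝ)+1)/((n:ℝ)-1) - 2/((n:ℝ)-1) * t) := by
      intro t
      rw [hu, Polynomial.eval_mul, Polynomial.eval_C, Polynomial.eval_comp]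
      simp
    refine ⟨u, ?_, ?_, ?_⟩
    · rw [hueval]
      have harg : ((n:ℝ)+1)/((n:ℝ)-1) - 2/((n:ℝ)-1) * 0 = 1 + 2/((n:ℝ)-1) := by
        field_simp
        ring
      rw [harg]
      have hx1 : (1:ℝ) ≤ 1 + 2/((n:ℝ)-1) := by
        have : (0:ℝ) < 2/((n:ℝ)-1) := by positivity
        linarith
      have hgrow := chebT_growth hx1 d
      have hd2 : ((n:ℝ) - 1) ≤ ((d:ℕ):ℝ)^2 := by
        have h3 : n < (n.sqrt + 1)^2 := Nat.lt_succ_sqrt' n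
        have : (n:ℝ) < ((n.sqrt + 1 : ℕ):ℝ)^2 := by exact_mod_cast h3
        rw [hd]
        push_cast
        push_cast at this
        linarith
      have hval : (3:ℝ) ≤ (Polynomial.Chebyshev.T ℝ (d : ℤ)).eval (1 + 2/((n:ℝ)-1)) := by
        refine le_trans ?_ hgrow
        have : ((d:ℕ):ℝ)^2 * (1 + 2/((n:ℝ)-1) - 1) = ((d:ℕ):ℝ)^2 * (2/((n:ℝ)-1)) := by ring
        rw [this]
        rw [show ((d:ℕ):ℝ)^2 * (2/((n:ℝ)-1)) = (((d:ℕ):ℝ)^2 / ((n:ℝ)-1)) * 2 by ring]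
        have : (1:ℝ) ≤ ((d:ℕ):ℝ)^2 / ((n:ℝ)-1) := by
          rw [le_div_iff₀ hden]
          linarith
        linarith
      rw [abs_of_pos (by linarith)]
      linarith
    · intro k hk1 hkn
      rw [hueval]
      have hkR1 : (1:ℝ) ≤ (k:ℝ) := by exact_mod_cast hk1
      have hkRn : (k:ℝ) ≤ (n:ℝ) := by exact_mod_cast hkn
      have harg : ((n:ℝ)+1)/((n:ℝ)-1) - 2/((n:ℝ)-1) * (k:ℝ)
          = ((n:ℝ)+1-2*(k:ℝ))/((n:ℝ)-1) := by
        field_simp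
      rw [harg]
      have h1 : ((n:ℝ)+1-2*(k:ℝ))/((n:ℝ)-1) ≤ 1 := by
        rw [div_le_one hden]
        linarith
      have h2 : -1 ≤ ((n:ℝ)+1-2*(k:ℝ))/((n:ℝ)-1) := by
        rw [le_div_iff₀ hden]
        linarith
      have := chebT_abs_le (d : ℤ) h2 h1
      rw [abs_mul]
      calc |1/3| * |(Polynomial.Chebyshev.T ℝ (d : ℤ)).eval _| ≤ |1/3| * 1 := by
            apply mul_le_mul_of_nonneg_left this (abs_nonneg _)
        _ = 1/3 := by norm_num
    · rw [hu]
      refine le_trans (Polynomial.natDegree_mul_le) ?_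
      simp only [Polynomial.natDegree_C, zero_add]
      refine le_trans (Polynomial.natDegree_comp_le) ?_
      have hlin : (Polynomial.C (((n:ℝ)+1)/((n:ℝ)-1))
          - Polynomial.C (2/((n:ℝ)-1)) * Polynomial.X).natDegree ≤ 1 := by
        refine le_trans (Polynomial.natDegree_sub_le _ _) ?_
        simp only [Polynomial.natDegree_C, max_le_iff]
        exact ⟨by omega, le_trans (Polynomial.natDegree_mul_le) (by simp)⟩
      calc (Polynomial.Chebyshev.T ℝ (d : ℤ)).natDegree * _ ≤ d * 1 :=
            Nat.mul_le_mul (chebT_natDegree_le d) hlin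
        _ = d := Nat.mul_one d

end Stage6

section Stage7

lemma card_wt_eq {n k : ℕ} (hkn : k ≤ n) :
    ((Finset.univ : Finset (Fin n → Bool)).filter (fun x => wt x = k)).card = n.choose k := by
  classical
  have h := count_weight_superset (∅ : Finset (Fin n)) (k := k) (by simp) hkn
  simp only [Finset.card_empty, Nat.sub_zero] at h
  rw [← h]
  congr 1
  apply Finset.filter_congr
  intro x _
  simp

lemma N13_le_of_univar {n : ℕ} {u : Polynomial ℝ} (h0 : 1 ≤ |u.eval 0|)
    (hk : ∀ k : ℕ, 1 ≤ k → k ≤ n → |u.eval (k:ℝ)| ≤ 1/3) :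
    N13 (NOR n) ≤ u.natDegree := by
  obtain ⟨p, hp, hd⟩ := nor_mem_of_univar h0 hk
  unfold N13 approxNdeg
  exact Nat.sInf_le ⟨p, hp, hd⟩

lemma nor_set_nonempty (n : ℕ) :
    {d : ℕ | ∃ p : MvPolynomial (Fin n) ℝ,
      IsApproxNdet (1/3) (NOR n) p ∧ p.totalDegree ≤ d}.Nonempty := by
  rcases Nat.eq_zero_or_pos n with rfl | hn
  · have h0' : (1:ℝ) ≤ |(Polynomial.C 1 : Polynomial ℝ).eval 0| := by simp
    have hk' : ∀ k : ℕ, 1 ≤ k → k ≤ 0 → |(Polynomial.C 1 : Polynomial ℝ).eval (k:ℝ)| ≤ 1/3 := by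
      intro k h1 h2; omega
    obtain ⟨p, hp, hd⟩ := nor_mem_of_univar h0' hk'
    exact ⟨_, p, hp, hd⟩
  · obtain ⟨u, h0, hk, -⟩ := exists_univar n hn
    obtain ⟨p, hp, hd⟩ := nor_mem_of_univar h0 hk
    exact ⟨_, p, hp, hd⟩

lemma N13_lower (n : ℕ) : Real.sqrt ((n:ℝ)/8) ≤ (N13 (NOR n) : ℝ) := by
  rcases Nat.eq_zero_or_pos n with rfl | hn
  · simp
  · have hmem : N13 (NOR n) ∈ {d : ℕ | ∃ p : MvPolynomial (Fin n) ℝ,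
        IsApproxNdet (1/3) (NOR n) p ∧ p.totalDegree ≤ d} := by
      unfold N13 approxNdeg
      exact Nat.sInf_mem (nor_set_nonempty n)
    obtain ⟨p, hp, hdeg⟩ := hmem
    have hzero : NOR n (fun _ => false) = true := (NOR_true_iff _).mpr (fun i => rfl)
    have hβ : 1 ≤ |evalB p (fun _ => false)| := (hp (fun _ => false)).2 hzero
    obtain ⟨q, hqdeg, hqvals⟩ := symm_exists p
    have hW0 : (Finset.univ : Finset (Fin n → Bool)).filter (fun x => wt x = 0)
        = {fun _ => false} := by
      ext x
      simp only [Finset.mem_filter, Finset.mem_univ, true_and, Finset.mem_singleton]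
      rw [wt_zero_iff]
      constructor
      · intro h; funext i; exact h i
      · intro h i; rw [h]
    have hq0 : q.eval 0 = evalB p (fun _ => false) := by
      have := hqvals 0 (Nat.zero_le n)
      rw [hW0] at this
      simpa using this
    have hqk : ∀ k : ℕ, 1 ≤ k → k ≤ n → |q.eval (k:ℝ)| ≤ 1/3 := by
      intro k h1 h2
      have hv := hqvals k h2
      have hchoose : (0:ℝ) < (n.choose k : ℝ) := by exact_mod_cast Nat.choose_pos h2
      have hbound : |∑ x ∈ Finset.univ.filter (fun x : Fin n → Bool => wt x = k), evalB p x|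
          ≤ (n.choose k : ℝ) * (1/3) := by
        refine le_trans (Finset.abs_sum_le_sum_abs _ _) ?_
        have hb : ∀ x ∈ Finset.univ.filter (fun x : Fin n → Bool => wt x = k),
            |evalB p x| ≤ 1/3 := by
          intro x hx
          rw [Finset.mem_filter] at hx
          have hfalse : NOR n x = false := NOR_false_of_wt_pos (by omega)
          exact (hp x).1 hfalse
        refine le_trans (Finset.sum_le_sum hb) ?_
        rw [Finset.sum_const, nsmul_eq_mul, card_wt_eq h2]
      rw [← hv, abs_mul, abs_of_pos hchoose] at hbound
      nlinarith [hbound, hchoose, abs_nonneg (q.eval (k:ℝ))]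
    have hfinal : (q.natDegree : ℝ) ≤ (N13 (NOR n) : ℝ) := by
      exact_mod_cast le_trans hqdeg hdeg
    rcases le_abs.mp hβ with hpos | hneg
    · exact le_trans (univar_lower hn (hq0 ▸ hpos) hqk) hfinal
    · have h0' : 1 ≤ (-q).eval 0 := by
        rw [Polynomial.eval_neg, hq0]; linarith
      have hk' : ∀ k : ℕ, 1 ≤ k → k ≤ n → |(-q).eval (k:ℝ)| ≤ 1/3 := by
        intro k hh1 hh2; rw [Polynomial.eval_neg, abs_neg]; exact hqk k hh1 hh2
      have hlow := univar_lower hn h0' hk'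
      rw [Polynomial.natDegree_neg] at hlow
      exact le_trans hlow hfinal

lemma N13_upper (n : ℕ) : (N13 (NOR n) : ℝ) ≤ 2 * Real.sqrt (n : ℝ) := by
  rcases Nat.eq_zero_or_pos n with rfl | hn
  · have h0' : (1:ℝ) ≤ |(Polynomial.C 1 : Polynomial ℝ).eval 0| := by simp
    have hk' : ∀ k : ℕ, 1 ≤ k → k ≤ 0 → |(Polynomial.C 1 : Polynomial ℝ).eval (k:ℝ)| ≤ 1/3 := by
      intro k h1 h2; omega
    have h := N13_le_of_univar h0' hk'
    simp only [Polynomial.natDegree_C, Nat.le_zero] at h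
    rw [h]
    simp
  · obtain ⟨u, h0, hk, hdeg⟩ := exists_univar n hn
    have h1 : N13 (NOR n) ≤ n.sqrt + 1 := le_trans (N13_le_of_univar h0 hk) hdeg
    have hs : ((n.sqrt : ℕ):ℝ) ≤ Real.sqrt (n:ℝ) := by
      rw [show ((n.sqrt : ℕ):ℝ) = Real.sqrt (((n.sqrt : ℕ):ℝ)^2) by
        rw [Real.sqrt_sq (by positivity)]]
      refine Real.sqrt_le_sqrt ?_
      have h2' : n.sqrt ^ 2 ≤ n := Nat.sqrt_le' n
      have h2 : ((n.sqrt : ℕ):ℝ)^2 ≤ (n:ℝ) := by exact_mod_cast h2'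
      push_cast at h2
      nlinarith [h2]
    have hone : (1:ℝ) ≤ Real.sqrt (n:ℝ) := by
      rw [show (1:ℝ) = Real.sqrt 1 by simp]
      exact Real.sqrt_le_sqrt (by exact_mod_cast hn)
    calc (N13 (NOR n) : ℝ) ≤ ((n.sqrt + 1 : ℕ):ℝ) := by exact_mod_cast h1
      _ ≤ 2 * Real.sqrt (n:ℝ) := by push_cast; linarith

end Stage7

end Stmt4Aux

/-- `N(NOR_n) ≥ √(n/8)` and `N(NOR_n) = Θ(√n)`. -/
theorem stmt4 :
    (∀ n : ℕ, Real.sqrt ((n : ℝ) / 8) ≤ (N13 (NOR n) : ℝ)) ∧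
    ∃ c C : ℝ, 0 < c ∧ 0 < C ∧ ∀ n : ℕ,
      c * Real.sqrt (n : ℝ) ≤ (N13 (NOR n) : ℝ) ∧
      (N13 (NOR n) : ℝ) ≤ C * Real.sqrt (n : ℝ) := by
  constructor
  · exact fun n => Stmt4Aux.N13_lower n
  · refine ⟨Real.sqrt (1/8), 2, by positivity, by norm_num, ?_⟩
    intro n
    constructor
    · have h : Real.sqrt (1/8) * Real.sqrt (n:ℝ) = Real.sqrt ((n:ℝ)/8) := by
        rw [← Real.sqrt_mul (by norm_num)]
        congr 1
        ring
      rw [h]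
      exact Stmt4Aux.N13_lower n
    · exact Stmt4Aux.N13_upper n
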